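/- Let d ≥ 1 be a natural number and let a ∈ ℝ satisfy 0 < a < 1/(d+1). Define Ω := { Σ_{s=0}^{N−1} a^s·k_s : N ≥ 1, (k_0,…,k_{N−1}) ∈ {0,1,…,d}^N }. Then the closure of Ω in ℝ has Hausdorff dimension at most log(d+1)/log(1/a), which is strictly less than 1; in particular, the closure of Ω has Lebesgue measure zero. -/

import Mathlib

open scoped ENNReal NNReal

open Set Filter MeasureTheory Finset in
/-- Let `d ≥ 1` and `0 < a < 1/(d+1)`. Let
`Ω = { Σ_{s=0}^{N-1} a^s k_s : N ≥ 1, k_s ∈ {0,…,d} }`. Then the closure of `Ω` has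
Hausdorff dimension at most `log(d+1)/log(1/a)`, which is strictly less than `1`;
in particular the closure of `Ω` has Lebesgue measure zero. -/
theorem closure_digitSums_dimH_lt_one (d : ℕ) (hd : 1 ≤ d) (a : ℝ)
    (ha0 : 0 < a) (ha : a < 1 / (d + 1)) :
    dimH (closure {x : ℝ | ∃ N : ℕ, 1 ≤ N ∧ ∃ k : Fin N → ℕ, (∀ s, k s ≤ d) ∧
        x = ∑ s : Fin N, a ^ (s : ℕ) * k s}) ≤
      ENNReal.ofReal (Real.log (d + 1) / Real.log (1 / a)) ∧
    Real.log (d + 1) / Real.log (1 / a) < 1 ∧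
    MeasureTheory.volume (closure {x : ℝ | ∃ N : ℕ, 1 ≤ N ∧ ∃ k : Fin N → ℕ,
        (∀ s, k s ≤ d) ∧ x = ∑ s : Fin N, a ^ (s : ℕ) * k s}) = 0 := by
  set Ω : Set ℝ := {x : ℝ | ∃ N : ℕ, 1 ≤ N ∧ ∃ k : Fin N → ℕ, (∀ s, k s ≤ d) ∧
      x = ∑ s : Fin N, a ^ (s : ℕ) * k s} with hΩ
  have hd1 : (1 : ℝ) < (d : ℝ) + 1 := by
    have : (1 : ℝ) ≤ (d : ℝ) := by exact_mod_cast hd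
    linarith
  have hdpos : (0 : ℝ) < (d : ℝ) + 1 := by linarith
  have hainv : (d : ℝ) + 1 < 1 / a := by
    rw [lt_div_iff₀ ha0]
    have h2 := (lt_div_iff₀ hdpos).1 ha
    linarith
  have ha1 : a < 1 := by
    have : (1 : ℝ) / ((d : ℝ) + 1) ≤ 1 := by
      rw [div_le_one hdpos]; linarith
    linarith
  have h1a : 0 < 1 - a := by linarith
  have hlogd : 0 < Real.log ((d : ℝ) + 1) := Real.log_pos hd1
  have hloginv : Real.log ((d : ℝ) + 1) < Real.log (1 / a) :=
    Real.log_lt_log hdpos hainv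
  have hloginv0 : 0 < Real.log (1 / a) := hlogd.trans hloginv
  set r : ℝ := Real.log ((d : ℝ) + 1) / Real.log (1 / a) with hr
  have hr0 : 0 < r := div_pos hlogd hloginv0
  have hr1 : r < 1 := (div_lt_one hloginv0).2 hloginv
  -- key rpow identity : a ^ r = 1/(d+1)
  have har : a ^ r = 1 / ((d : ℝ) + 1) := by
    rw [Real.rpow_def_of_pos ha0]
    have hlog : Real.log (1 / a) = -Real.log a := by
      rw [one_div, Real.log_inv]
    have hla : Real.log a ≠ 0 := by
      have : Real.log a < 0 := Real.log_neg ha0 ha1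
      linarith
    have h3 : Real.log a * r = -Real.log ((d : ℝ) + 1) := by
      rw [hr, hlog, div_neg, mul_neg, mul_div_cancel₀ _ hla]
    rw [h3, Real.exp_neg, Real.exp_log hdpos, one_div]
  set L : ℝ := (d : ℝ) / (1 - a) with hL
  have hLpos : 0 < L := by
    apply div_pos _ h1a
    have : (1 : ℝ) ≤ (d : ℝ) := by exact_mod_cast hd
    linarith
  -- the prefix-sum map
  set P : ∀ n : ℕ, (Fin n → Fin (d + 1)) → ℝ :=
    fun n k => ∑ s : Fin n, a ^ (s : ℕ) * ((k s : ℕ) : ℝ) with hP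
  -- covering property
  have hcover : ∀ n : ℕ, closure Ω ⊆
      ⋃ k : Fin n → Fin (d + 1), Icc (P n k) (P n k + L * a ^ n) := by
    intro n
    apply closure_minimal
    · rintro x ⟨N, hN, k, hk, rfl⟩
      set g : ℕ → ℝ := fun s => if h : s < N then a ^ s * ((k ⟨s, h⟩ : ℕ) : ℝ) else 0 with hg
      have hg0 : ∀ s, 0 ≤ g s := by
        intro s
        by_cases h : s < N
        · simp only [hg, dif_pos h]
          positivity
        · simp [hg, h]
      have hgle : ∀ s, g s ≤ (d : ℝ) * a ^ s := by
        intro s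
        by_cases h : s < N
        · simp only [hg, dif_pos h]
          rw [mul_comm ((d : ℝ)) (a ^ s)]
          apply mul_le_mul_of_nonneg_left _ (by positivity)
          exact_mod_cast hk _
        · simp only [hg, dif_neg h]
          positivity
      have hx : ∑ s : Fin N, a ^ (s : ℕ) * ((k s : ℕ) : ℝ) = ∑ s ∈ range N, g s := by
        rw [← Fin.sum_univ_eq_sum_range g N]
        refine Finset.sum_congr rfl fun i _ => ?_
        rw [hg]
        simp [i.isLt]
      set k' : Fin n → Fin (d + 1) := fun i =>
        if h : (i : ℕ) < N then ⟨k ⟨i, h⟩, Nat.lt_succ_of_le (hk _)⟩ else ⟨0, Nat.succ_pos d⟩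
        with hk'
      have hPk' : P n k' = ∑ s ∈ range n, g s := by
        rw [hP, ← Fin.sum_univ_eq_sum_range g n]
        refine Finset.sum_congr rfl fun i _ => ?_
        rw [hk', hg]
        by_cases h : (i : ℕ) < N <;> simp [h]
      refine mem_iUnion.2 ⟨k', ?_⟩
      rw [hx, hPk']
      rcases le_or_gt N n with h | h
      · have heq : ∑ s ∈ range N, g s = ∑ s ∈ range n, g s := by
          refine Finset.sum_subset (Finset.range_subset_range.2 h) fun s _ hs => ?_
          rw [Finset.mem_range, not_lt] at hs
          rw [hg]
          simp [Nat.not_lt.2 hs]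
        rw [heq]
        constructor
        · exact le_rfl
        · nlinarith [pow_pos ha0 n]
      · have hsplit : ∑ s ∈ range n, g s + ∑ s ∈ Finset.Ico n N, g s
            = ∑ s ∈ range N, g s := Finset.sum_range_add_sum_Ico g h.le
        have htail0 : 0 ≤ ∑ s ∈ Finset.Ico n N, g s :=
          Finset.sum_nonneg fun s _ => hg0 s
        have htail : ∑ s ∈ Finset.Ico n N, g s ≤ L * a ^ n := by
          calc ∑ s ∈ Finset.Ico n N, g s
              ≤ ∑ s ∈ Finset.Ico n N, (d : ℝ) * a ^ s :=
                Finset.sum_le_sum fun s _ => hgle s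
            _ = (d : ℝ) * (a ^ n * ∑ i ∈ range (N - n), a ^ i) := by
                rw [Finset.sum_Ico_eq_sum_range]
                simp only [pow_add, ← mul_assoc]
                rw [← Finset.mul_sum]
            _ ≤ (d : ℝ) * (a ^ n * (1 - a)⁻¹) := by
                apply mul_le_mul_of_nonneg_left _ (by positivity)
                apply mul_le_mul_of_nonneg_left _ (by positivity)
                calc ∑ i ∈ range (N - n), a ^ i
                    ≤ ∑' i : ℕ, a ^ i :=
                      Summable.sum_le_tsum _ (fun i _ => pow_nonneg ha0.le i)
                        (summable_geometric_of_lt_one ha0.le ha1)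
                  _ = (1 - a)⁻¹ := tsum_geometric_of_lt_one ha0.le ha1
            _ = L * a ^ n := by rw [hL]; field_simp
        constructor
        · linarith
        · linarith
    · exact isClosed_iUnion_of_finite fun k => isClosed_Icc
  -- Hausdorff measure bound
  have hdiam : ∀ n : ℕ, ∀ k : Fin n → Fin (d + 1),
      Metric.ediam (Icc (P n k) (P n k + L * a ^ n)) = ENNReal.ofReal (L * a ^ n) := by
    intro n k
    rw [Real.ediam_Icc]
    congr 1
    ring
  have hμ : μH[r] (closure Ω) ≤ ENNReal.ofReal (L ^ r) := by
    have hrt : Tendsto (fun n : ℕ => ENNReal.ofReal (L * a ^ n)) atTop (nhds 0) := by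
      rw [show (0 : ℝ≥0∞) = ENNReal.ofReal 0 by simp]
      apply ENNReal.tendsto_ofReal
      have := (tendsto_pow_atTop_nhds_zero_of_lt_one ha0.le ha1).const_mul L
      simpa using this
    have key := MeasureTheory.Measure.hausdorffMeasure_le_liminf_sum r (closure Ω)
      (fun n : ℕ => ENNReal.ofReal (L * a ^ n)) hrt
      (fun n (k : Fin n → Fin (d + 1)) => Icc (P n k) (P n k + L * a ^ n))
      (Eventually.of_forall fun n => fun k => (hdiam n k).le)
      (Eventually.of_forall hcover)
    refine key.trans (le_of_eq ?_)
    have hconst : ∀ n : ℕ,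
        (∑ k : Fin n → Fin (d + 1),
          Metric.ediam (Icc (P n k) (P n k + L * a ^ n)) ^ r) = ENNReal.ofReal (L ^ r) := by
      intro n
      have hLa : 0 < L * a ^ n := by positivity
      have hcard : Fintype.card (Fin n → Fin (d + 1)) = (d + 1) ^ n := by
        simp [Fintype.card_fun]
      rw [Finset.sum_congr rfl fun k _ => by rw [hdiam n k],
        Finset.sum_const, Finset.card_univ, hcard, nsmul_eq_mul,
        ENNReal.ofReal_rpow_of_pos hLa]
      rw [show (((d + 1) ^ n : ℕ) : ℝ≥0∞) = ENNReal.ofReal (((d : ℝ) + 1) ^ n) by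
        rw [ENNReal.ofReal_pow (by positivity)]
        norm_cast]
      rw [← ENNReal.ofReal_mul (by positivity)]
      congr 1
      have : (L * a ^ n) ^ r = L ^ r * (a ^ r) ^ n := by
        rw [Real.mul_rpow hLpos.le (by positivity), ← Real.rpow_natCast a n,
          ← Real.rpow_mul ha0.le, mul_comm (n : ℝ) r, Real.rpow_mul ha0.le,
          Real.rpow_natCast]
      rw [this, har]
      have hdne : ((d : ℝ) + 1) ≠ 0 := ne_of_gt hdpos
      field_simp
      rw [← mul_pow, mul_one_div_cancel hdne, one_pow]
    have hfun : (fun n : ℕ => ∑ k : Fin n → Fin (d + 1),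
          Metric.ediam (Icc (P n k) (P n k + L * a ^ n)) ^ r)
        = fun _ : ℕ => ENNReal.ofReal (L ^ r) := funext hconst
    rw [hfun, liminf_const]
  have hdim : dimH (closure Ω) ≤ ENNReal.ofReal r := by
    have h2 := dimH_le_of_hausdorffMeasure_ne_top (d := r.toNNReal) (by
      rw [show ((r.toNNReal : ℝ≥0) : ℝ) = r from Real.coe_toNNReal r hr0.le]
      exact ne_top_of_le_ne_top ENNReal.ofReal_ne_top hμ)
    rwa [ENNReal.ofReal]
  have hvol : volume (closure Ω) = 0 := by
    have hlt : dimH (closure Ω) < ((1 : ℝ≥0) : ℝ≥0∞) := by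
      refine hdim.trans_lt ?_
      rw [show (((1 : ℝ≥0)) : ℝ≥0∞) = ENNReal.ofReal 1 by simp]
      exact ENNReal.ofReal_lt_ofReal_iff one_pos |>.2 hr1
    have h0 : μH[((1 : ℝ≥0) : ℝ)] (closure Ω) = 0 := hausdorffMeasure_of_dimH_lt hlt
    rw [← MeasureTheory.hausdorffMeasure_real]
    simpa using h0
  exact ⟨hdim, hr1, hvol⟩
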